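/- For every integer n ≥ 1 and all real numbers θ and ζ, Σ_{π ∈ S_n} θ^{ℓ(π)} · ζ^{u(π)} = ∏_{j=0}^{n−2} (θ + ζ + j), where the sum is over all permutations π of {1,…,n} and the empty product (n = 1) equals 1. In particular, for θ, ζ > 0 the assignment P(π) = θ^{ℓ(π)} ζ^{u(π)} / (θ+ζ)_{n−1} defines a probability distribution on S_n which gives equal probability to all permutations with the same numbers of lower and upper records. -/

import Mathlib

open Finset

/-- `π j` is a lower record: it is the minimum among the first `j+1` entries. -/
def isLowerRecord {n : ℕ} (π : Equiv.Perm (Fin n)) (j : Fin n) : Prop :=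
  ∀ k, k ≤ j → π j ≤ π k

/-- `π j` is an upper record: it is the maximum among the first `j+1` entries. -/
def isUpperRecord {n : ℕ} (π : Equiv.Perm (Fin n)) (j : Fin n) : Prop :=
  ∀ k, k ≤ j → π k ≤ π j

instance {n : ℕ} (π : Equiv.Perm (Fin n)) (j : Fin n) : Decidable (isLowerRecord π j) :=
  inferInstanceAs (Decidable (∀ k, k ≤ j → π j ≤ π k))

instance {n : ℕ} (π : Equiv.Perm (Fin n)) (j : Fin n) : Decidable (isUpperRecord π j) :=
  inferInstanceAs (Decidable (∀ k, k ≤ j → π k ≤ π j))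

/-- number of proper (position ≥ 2, i.e. index ≥ 1) lower records -/
def properLowerCount {n : ℕ} (π : Equiv.Perm (Fin n)) : ℕ :=
  (univ.filter fun j : Fin n => 0 < j.val ∧ isLowerRecord π j).card

/-- number of proper (position ≥ 2, i.e. index ≥ 1) upper records -/
def properUpperCount {n : ℕ} (π : Equiv.Perm (Fin n)) : ℕ :=
  (univ.filter fun j : Fin n => 0 < j.val ∧ isUpperRecord π j).card

/-- `A n ℓ u` = number of permutations of `{1,…,n}` with exactly `ℓ` proper lower
records and exactly `u` proper upper records. -/
def A (n ℓ u : ℕ) : ℕ :=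
  (univ.filter fun π : Equiv.Perm (Fin n) =>
    properLowerCount π = ℓ ∧ properUpperCount π = u).card

noncomputable def ext1 {n : ℕ} (σ : Equiv.Perm (Fin n)) (v : Fin (n + 1)) : Equiv.Perm (Fin (n + 1)) :=
  Equiv.ofBijective (fun i => Fin.lastCases v (fun j => v.succAbove (σ j)) i)
    (Finite.injective_iff_bijective.mp (by
      intro a b hab
      rcases Fin.eq_castSucc_or_eq_last a with ⟨a', rfl⟩ | rfl <;>
        rcases Fin.eq_castSucc_or_eq_last b with ⟨b', rfl⟩ | rfl <;>
        simp only [Fin.lastCases_last, Fin.lastCases_castSucc] at hab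
      · exact congrArg Fin.castSucc (σ.injective (Fin.succAbove_right_injective hab))
      · exact absurd hab (Fin.succAbove_ne v (σ a'))
      · exact absurd hab.symm (Fin.succAbove_ne v (σ b'))
      · rfl))

@[simp] lemma ext1_last {n : ℕ} (σ : Equiv.Perm (Fin n)) (v : Fin (n + 1)) :
    ext1 σ v (Fin.last n) = v := by
  simp [ext1]

@[simp] lemma ext1_castSucc {n : ℕ} (σ : Equiv.Perm (Fin n)) (v : Fin (n + 1)) (j : Fin n) :
    ext1 σ v j.castSucc = v.succAbove (σ j) := by
  simp [ext1]

lemma lower_castSucc {n : ℕ} (σ : Equiv.Perm (Fin n)) (v : Fin (n + 1)) (j : Fin n) :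
    isLowerRecord (ext1 σ v) j.castSucc ↔ isLowerRecord σ j := by
  constructor
  · intro h k hk
    have := h k.castSucc (by simpa using hk)
    rw [ext1_castSucc, ext1_castSucc] at this
    exact Fin.succAbove_le_succAbove_iff.mp this
  · intro h k hk
    have hk' : k ≠ Fin.last n := Fin.ne_last_of_lt (lt_of_le_of_lt hk (Fin.castSucc_lt_last j))
    obtain ⟨k', rfl⟩ := Fin.exists_castSucc_eq.mpr hk'
    rw [ext1_castSucc, ext1_castSucc]
    exact Fin.succAbove_le_succAbove_iff.mpr (h k' (by simpa using hk))

lemma upper_castSucc {n : ℕ} (σ : Equiv.Perm (Fin n)) (v : Fin (n + 1)) (j : Fin n) :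
    isUpperRecord (ext1 σ v) j.castSucc ↔ isUpperRecord σ j := by
  constructor
  · intro h k hk
    have := h k.castSucc (by simpa using hk)
    rw [ext1_castSucc, ext1_castSucc] at this
    exact Fin.succAbove_le_succAbove_iff.mp this
  · intro h k hk
    have hk' : k ≠ Fin.last n := Fin.ne_last_of_lt (lt_of_le_of_lt hk (Fin.castSucc_lt_last j))
    obtain ⟨k', rfl⟩ := Fin.exists_castSucc_eq.mpr hk'
    rw [ext1_castSucc, ext1_castSucc]
    exact Fin.succAbove_le_succAbove_iff.mpr (h k' (by simpa using hk))

lemma lower_last {n : ℕ} (σ : Equiv.Perm (Fin n)) (v : Fin (n + 1)) :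
    isLowerRecord (ext1 σ v) (Fin.last n) ↔ v = 0 := by
  constructor
  · intro h
    have := h ((ext1 σ v).symm 0) (Fin.le_last _)
    rw [ext1_last, Equiv.apply_symm_apply] at this
    exact Fin.le_zero_iff.mp this
  · intro h k _
    rw [ext1_last, h]
    exact Fin.zero_le _

lemma upper_last {n : ℕ} (σ : Equiv.Perm (Fin n)) (v : Fin (n + 1)) :
    isUpperRecord (ext1 σ v) (Fin.last n) ↔ v = Fin.last n := by
  constructor
  · intro h
    have := h ((ext1 σ v).symm (Fin.last n)) (Fin.le_last _)
    rw [ext1_last, Equiv.apply_symm_apply] at this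
    exact Fin.last_le_iff.mp this
  · intro h k _
    rw [ext1_last, h]
    exact Fin.le_last _

lemma plc_ext1 {n : ℕ} (hn : 1 ≤ n) (σ : Equiv.Perm (Fin n)) (v : Fin (n + 1)) :
    properLowerCount (ext1 σ v) = properLowerCount σ + (if v = 0 then 1 else 0) := by
  rw [properLowerCount, properLowerCount, Finset.card_filter, Finset.card_filter,
    Fin.sum_univ_castSucc]
  congr 1
  · exact Finset.sum_congr rfl fun j _ => if_congr
      (by rw [Fin.coe_castSucc, lower_castSucc]) rfl rfl
  · have : (0 < (Fin.last n).val ∧ isLowerRecord (ext1 σ v) (Fin.last n)) ↔ v = 0 := by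
      rw [lower_last]
      simp only [Fin.val_last, and_iff_right_iff_imp]
      intro _; omega
    rw [if_congr this rfl rfl]

lemma puc_ext1 {n : ℕ} (hn : 1 ≤ n) (σ : Equiv.Perm (Fin n)) (v : Fin (n + 1)) :
    properUpperCount (ext1 σ v) = properUpperCount σ + (if v = Fin.last n then 1 else 0) := by
  rw [properUpperCount, properUpperCount, Finset.card_filter, Finset.card_filter,
    Fin.sum_univ_castSucc]
  congr 1
  · exact Finset.sum_congr rfl fun j _ => if_congr
      (by rw [Fin.coe_castSucc, upper_castSucc]) rfl rfl
  · have : (0 < (Fin.last n).val ∧ isUpperRecord (ext1 σ v) (Fin.last n)) ↔ v = Fin.last n := by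
      rw [upper_last]
      simp only [Fin.val_last, and_iff_right_iff_imp]
      intro _; omega
    rw [if_congr this rfl rfl]

lemma finsum_aux (θ ζ : ℝ) {n : ℕ} (hn : 1 ≤ n) :
    (∑ v : Fin (n + 1),
        θ ^ (if v = 0 then 1 else 0) * ζ ^ (if v = Fin.last n then 1 else 0))
      = θ + ζ + ((n : ℝ) - 1) := by
  have h0 : (0 : Fin (n + 1)) ≠ Fin.last n := by
    rw [Fin.ne_iff_vne]
    simp only [Fin.val_zero, Fin.val_last]
    omega
  have hpt : ∀ v : Fin (n + 1),
      θ ^ (if v = 0 then 1 else 0) * ζ ^ (if v = Fin.last n then 1 else 0)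
        = 1 + ((if v = 0 then θ - 1 else 0) + (if v = Fin.last n then ζ - 1 else 0)) := by
    intro v
    by_cases h1 : v = 0
    · subst h1
      simp [h0]
    · by_cases h2 : v = Fin.last n <;> simp [h1, h2, Nat.one_le_iff_ne_zero.mp hn]
  rw [Finset.sum_congr rfl fun v _ => hpt v, Finset.sum_add_distrib, Finset.sum_add_distrib,
    Finset.sum_const, Finset.sum_ite_eq' univ (0 : Fin (n+1)) (fun _ => θ - 1),
    Finset.sum_ite_eq' univ (Fin.last n) (fun _ => ζ - 1)]
  simp only [Finset.mem_univ, if_true, Finset.card_univ, Fintype.card_fin, nsmul_eq_mul,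
    mul_one]
  push_cast
  ring

lemma key_sum (θ ζ : ℝ) : ∀ n, 1 ≤ n →
    (∑ π : Equiv.Perm (Fin n), θ ^ properLowerCount π * ζ ^ properUpperCount π)
      = ∏ j ∈ Finset.range (n - 1), (θ + ζ + (j : ℝ)) := by
  intro n hn
  induction n, hn using Nat.le_induction with
  | base =>
    have h1 : ∀ π : Equiv.Perm (Fin 1), properLowerCount π = 0 := fun π => by
      rw [properLowerCount, Finset.card_eq_zero, Finset.filter_eq_empty_iff]
      intro j _
      simp [Fin.val_eq_zero j]
    have h2 : ∀ π : Equiv.Perm (Fin 1), properUpperCount π = 0 := fun π => by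
      rw [properUpperCount, Finset.card_eq_zero, Finset.filter_eq_empty_iff]
      intro j _
      simp [Fin.val_eq_zero j]
    simp only [h1, h2]
    simp [Fintype.card_perm]
  | succ n hn ih =>
    have hbij : Function.Bijective
        (fun p : Equiv.Perm (Fin n) × Fin (n + 1) => ext1 p.1 p.2) := by
      rw [Fintype.bijective_iff_injective_and_card]
      constructor
      · rintro ⟨σ, v⟩ ⟨σ', v'⟩ h
        simp only at h
        have hv : v = v' := by
          have := congrArg (fun π : Equiv.Perm (Fin (n + 1)) => π (Fin.last n)) h
          simpa using this
        have hσ : σ = σ' := by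
          ext j
          have := congrArg (fun π : Equiv.Perm (Fin (n + 1)) => π j.castSucc) h
          simp only [ext1_castSucc, hv] at this
          exact congrArg Fin.val (σ'.injective.eq_iff.mpr rfl ▸
            (Fin.succAbove_right_injective this))
        simp [hv, hσ]
      · simp [Fintype.card_perm, Nat.factorial_succ]
        ring
    rw [← Function.Bijective.sum_comp hbij
      (fun π => θ ^ properLowerCount π * ζ ^ properUpperCount π)]
    rw [Fintype.sum_prod_type]
    have hterm : ∀ (σ : Equiv.Perm (Fin n)) (v : Fin (n + 1)),
        θ ^ properLowerCount (ext1 σ v) * ζ ^ properUpperCount (ext1 σ v)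
          = (θ ^ properLowerCount σ * ζ ^ properUpperCount σ) *
            (θ ^ (if v = 0 then 1 else 0) * ζ ^ (if v = Fin.last n then 1 else 0)) := by
      intro σ v
      rw [plc_ext1 hn, puc_ext1 hn, pow_add, pow_add]
      ring
    calc (∑ σ : Equiv.Perm (Fin n), ∑ v : Fin (n + 1),
            θ ^ properLowerCount (ext1 σ v) * ζ ^ properUpperCount (ext1 σ v))
        = ∑ σ : Equiv.Perm (Fin n),
            (θ ^ properLowerCount σ * ζ ^ properUpperCount σ) * (θ + ζ + ((n : ℝ) - 1)) := by
          refine Finset.sum_congr rfl fun σ _ => ?_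
          rw [Finset.sum_congr rfl fun v _ => hterm σ v, ← Finset.mul_sum, finsum_aux θ ζ hn]
      _ = (∏ j ∈ Finset.range (n - 1), (θ + ζ + (j : ℝ))) * (θ + ζ + ((n : ℝ) - 1)) := by
          rw [← Finset.sum_mul, ih]
      _ = ∏ j ∈ Finset.range (n + 1 - 1), (θ + ζ + (j : ℝ)) := by
          obtain ⟨m, rfl⟩ : ∃ m, n = m + 1 := ⟨n - 1, by omega⟩
          rw [show m + 1 + 1 - 1 = m + 1 from rfl, Finset.prod_range_succ,
            show m + 1 - 1 = m from rfl]
          push_cast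
          ring

/-- the generating-function identity
`Σ_{π ∈ S_n} θ^{ℓ(π)} ζ^{u(π)} = ∏_{j=0}^{n−2} (θ+ζ+j)`, and in particular for
`θ, ζ > 0` the formula `P(π) = θ^{ℓ(π)} ζ^{u(π)}/(θ+ζ)_{n−1}` defines a probability
distribution on `S_n` giving equal probability to all permutations with the same
numbers of lower and upper records. -/
theorem stmt_3 (n : ℕ) (hn : 1 ≤ n) (θ ζ : ℝ) :
    (∑ π : Equiv.Perm (Fin n), θ ^ properLowerCount π * ζ ^ properUpperCount π)
      = (∏ j ∈ Finset.range (n - 1), (θ + ζ + (j : ℝ))) ∧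
    (0 < θ → 0 < ζ →
      (∑ π : Equiv.Perm (Fin n),
          θ ^ properLowerCount π * ζ ^ properUpperCount π
            / ∏ j ∈ Finset.range (n - 1), (θ + ζ + (j : ℝ))) = 1 ∧
      ∀ π π' : Equiv.Perm (Fin n),
        properLowerCount π = properLowerCount π' →
        properUpperCount π = properUpperCount π' →
        θ ^ properLowerCount π * ζ ^ properUpperCount π
            / (∏ j ∈ Finset.range (n - 1), (θ + ζ + (j : ℝ)))
          = θ ^ properLowerCount π' * ζ ^ properUpperCount π'
            / (∏ j ∈ Finset.range (n - 1), (θ + ζ + (j : ℝ)))) := by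
  have hkey := key_sum θ ζ n hn
  refine ⟨hkey, fun hθ hζ => ?_⟩
  have hP : 0 < ∏ j ∈ Finset.range (n - 1), (θ + ζ + (j : ℝ)) :=
    Finset.prod_pos fun j _ => by positivity
  refine ⟨?_, ?_⟩
  · rw [← Finset.sum_div, hkey, div_self hP.ne']
  · intro π π' h1 h2
    rw [h1, h2]
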